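/- Let ρ ∈ H¹(Ω) be a positive minimizer of the functional E_ε(v) = (1/2)∫_Ω |∇v|² + (1/(2ε²))(a - |v|²)². Then for every u ∈ H¹(Ω, ℂ), one has E_ε(ρu) = E_ε(ρ) + (1/2)∫_Ω ρ²|∇u|² + (ρ⁴/(2ε²))(1 - |u|²)². -/

import Mathlib

open MeasureTheory

noncomputable section

abbrev E3 : Type := EuclideanSpace ℝ (Fin 3)

def pd (f : E3 → ℝ) (j : Fin 3) (x : E3) : ℝ := fderiv ℝ f x (EuclideanSpace.single j 1)

def gradSqR (f : E3 → ℝ) (x : E3) : ℝ := ∑ j : Fin 3, (pd f j x) ^ 2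

def gradSqC (f : E3 → ℂ) (x : E3) : ℝ :=
  ∑ j : Fin 3, ‖fderiv ℝ f x (EuclideanSpace.single j 1)‖ ^ 2

def lap (f : E3 → ℝ) (x : E3) : ℝ :=
  ∑ j : Fin 3, fderiv ℝ (fun y => pd f j y) x (EuclideanSpace.single j 1)

lemma integ_aux (Ω : Set E3) (hΩbdd : Bornology.IsBounded Ω) (hΩmeas : MeasurableSet Ω)
    (a : E3 → ℝ) (ha_meas : Measurable a) (ha1 : ∀ x ∈ Ω, |a x| ≤ 1)
    (k : ℕ) (g : E3 → ℝ) (hg : Continuous g) :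
    Integrable (fun x => a x ^ k * g x) (volume.restrict Ω) := by
  haveI : IsFiniteMeasure (volume.restrict Ω) :=
    ⟨by rw [Measure.restrict_apply_univ]; exact hΩbdd.measure_lt_top⟩
  obtain ⟨C, hC⟩ : ∃ C, ∀ x ∈ closure Ω, ‖g x‖ ≤ C :=
    hΩbdd.isCompact_closure.exists_bound_of_continuousOn hg.continuousOn
  refine Integrable.mono' (integrable_const (max C 0)) ?_ ?_
  · exact ((ha_meas.pow_const k).mul hg.measurable).aestronglyMeasurable
  · rw [ae_restrict_iff' hΩmeas]
    filter_upwards with x hx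
    have h1 : |a x ^ k| ≤ 1 := by
      rw [abs_pow]; exact pow_le_one₀ (abs_nonneg _) (ha1 x hx)
    have h2 : ‖g x‖ ≤ max C 0 := le_trans (hC x (subset_closure hx)) (le_max_left _ _)
    calc ‖a x ^ k * g x‖ = |a x ^ k| * ‖g x‖ := by rw [norm_mul]; rfl
      _ ≤ 1 * max C 0 := by
          exact mul_le_mul h1 h2 (norm_nonneg _) zero_le_one
      _ = max C 0 := one_mul _


-- pd of a sum ρ + t•φ
lemma pd_add_smul (ρ φ : E3 → ℝ) (hρ : ContDiff ℝ 1 ρ) (hφ : ContDiff ℝ 1 φ) (t : ℝ)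
    (j : Fin 3) (x : E3) :
    pd (fun y => ρ y + t * φ y) j x = pd ρ j x + t * pd φ j x := by
  have h : HasFDerivAt (fun y => ρ y + t * φ y)
      (fderiv ℝ ρ x + t • fderiv ℝ φ x) x :=
    ((hρ.differentiable one_ne_zero x).hasFDerivAt).add
      (((hφ.differentiable one_ne_zero x).hasFDerivAt).const_smul t)
  simp only [pd, h.fderiv, ContinuousLinearMap.add_apply, ContinuousLinearMap.coe_smul',
    Pi.smul_apply, smul_eq_mul]

lemma gradSq_expand (ρ φ : E3 → ℝ) (hρ : ContDiff ℝ 1 ρ) (hφ : ContDiff ℝ 1 φ) (t : ℝ)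
    (x : E3) :
    gradSqR (fun y => ρ y + t * φ y) x =
      gradSqR ρ x + t * (2 * ∑ j : Fin 3, pd ρ j x * pd φ j x) + t^2 * gradSqR φ x := by
  unfold gradSqR
  rw [show ∑ j : Fin 3, (pd (fun y => ρ y + t * φ y) j x)^2
      = ∑ j : Fin 3, ((pd ρ j x)^2 + t * (2 * (pd ρ j x * pd φ j x)) + t^2 * (pd φ j x)^2)
    from Finset.sum_congr rfl fun j _ => by rw [pd_add_smul ρ φ hρ hφ t j x]; ring]
  simp only [Finset.sum_add_distrib, ← Finset.mul_sum]

lemma first_variation (Ω : Set E3) (hΩbdd : Bornology.IsBounded Ω) (hΩmeas : MeasurableSet Ω)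
    (ε : ℝ) (hε : 0 < ε) (a : E3 → ℝ) (ha_meas : Measurable a) (ha1 : ∀ x ∈ Ω, |a x| ≤ 1)
    (ρ : E3 → ℝ) (hρ : ContDiff ℝ 1 ρ)
    (hmin : ∀ v : E3 → ℝ, ContDiff ℝ 1 v →
      (∫ x in Ω, (((1:ℝ)/2) * gradSqR ρ x + (1/(2*ε^2)) * (a x - ρ x ^ 2) ^ 2)) ≤
      ∫ x in Ω, (((1:ℝ)/2) * gradSqR v x + (1/(2*ε^2)) * (a x - v x ^ 2) ^ 2))
    (φ : E3 → ℝ) (hφ : ContDiff ℝ 1 φ) :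
    (∫ x in Ω, ((∑ j : Fin 3, pd ρ j x * pd φ j x)
      - (2/ε^2) * (ρ x * φ x * (a x - ρ x ^ 2)))) = 0 := by
  have hε2 : (ε:ℝ)^2 ≠ 0 := pow_ne_zero 2 hε.ne'
  -- continuity of derivative components
  have hpdρ : ∀ j, Continuous (pd ρ j) := fun j =>
    (hρ.continuous_fderiv one_ne_zero).clm_apply continuous_const
  have hpdφ : ∀ j, Continuous (pd φ j) := fun j =>
    (hφ.continuous_fderiv one_ne_zero).clm_apply continuous_const
  have hρc : Continuous ρ := hρ.continuous
  have hφc : Continuous φ := hφ.continuous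
  have hS0 : Continuous (fun x => gradSqR ρ x) := by
    unfold gradSqR; exact continuous_finset_sum _ fun j _ => (hpdρ j).pow 2
  have hSφ : Continuous (fun x => gradSqR φ x) := by
    unfold gradSqR; exact continuous_finset_sum _ fun j _ => (hpdφ j).pow 2
  have hS1 : Continuous (fun x => ∑ j : Fin 3, pd ρ j x * pd φ j x) :=
    continuous_finset_sum _ fun j _ => (hpdρ j).mul (hpdφ j)
  -- coefficient functions
  set c0 : E3 → ℝ := fun x => (1/2) * gradSqR ρ x + (1/(2*ε^2)) * (a x - ρ x ^ 2) ^ 2 with hc0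
  set c1 : E3 → ℝ := fun x => (∑ j : Fin 3, pd ρ j x * pd φ j x)
      - (2/ε^2) * (ρ x * φ x * (a x - ρ x ^ 2)) with hc1
  set c2 : E3 → ℝ := fun x => (1/2) * gradSqR φ x
      + (1/(2*ε^2)) * (6 * ρ x ^ 2 * φ x ^ 2 - 2 * φ x ^ 2 * a x) with hc2
  set c3 : E3 → ℝ := fun x => (1/(2*ε^2)) * (4 * ρ x * φ x ^ 3) with hc3
  set c4 : E3 → ℝ := fun x => (1/(2*ε^2)) * φ x ^ 4 with hc4
  -- expansion
  have hexp : ∀ t : ℝ, ∀ x : E3,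
      (1/2) * gradSqR (fun y => ρ y + t * φ y) x
        + (1/(2*ε^2)) * (a x - (ρ x + t * φ x) ^ 2) ^ 2
      = c0 x + t * c1 x + t^2 * c2 x + t^3 * c3 x + t^4 * c4 x := by
    intro t x
    rw [gradSq_expand ρ φ hρ hφ t x]
    simp only [hc0, hc1, hc2, hc3, hc4]
    field_simp
    ring
  -- integrability
  have integ := integ_aux Ω hΩbdd hΩmeas a ha_meas ha1
  have hint0 : Integrable c0 (volume.restrict Ω) := by
    have : c0 = fun x => a x ^ 0 * ((1/2) * gradSqR ρ x + (1/(2*ε^2)) * ρ x ^ 4)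
        + a x ^ 1 * ((1/(2*ε^2)) * (-2 * ρ x ^ 2)) + a x ^ 2 * (1/(2*ε^2)) := by
      funext x; simp only [hc0]; ring
    rw [this]
    exact ((integ 0 _ ((continuous_const.mul hS0).add
        (continuous_const.mul (hρc.pow 4)))).add
      (integ 1 _ (continuous_const.mul (continuous_const.mul (hρc.pow 2))))).add
      (integ 2 _ continuous_const)
  have hint1 : Integrable c1 (volume.restrict Ω) := by
    have : c1 = fun x => a x ^ 0 * ((∑ j : Fin 3, pd ρ j x * pd φ j x)
        + (2/ε^2) * (ρ x * φ x * ρ x ^ 2)) + a x ^ 1 * (-(2/ε^2) * (ρ x * φ x)) := by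
      funext x; simp only [hc1]; ring
    rw [this]
    exact (integ 0 _ (hS1.add (continuous_const.mul ((hρc.mul hφc).mul (hρc.pow 2))))).add
      (integ 1 _ (continuous_const.mul (hρc.mul hφc)))
  have hint2 : Integrable c2 (volume.restrict Ω) := by
    have : c2 = fun x => a x ^ 0 * ((1/2) * gradSqR φ x
        + (1/(2*ε^2)) * (6 * ρ x ^ 2 * φ x ^ 2))
        + a x ^ 1 * (-(1/(2*ε^2)) * (2 * φ x ^ 2)) := by
      funext x; simp only [hc2]; ring
    rw [this]
    exact (integ 0 _ ((continuous_const.mul hSφ).add (continuous_const.mul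
        ((continuous_const.mul (hρc.pow 2)).mul (hφc.pow 2))))).add
      (integ 1 _ (continuous_const.mul (continuous_const.mul (hφc.pow 2))))
  have hint3 : Integrable c3 (volume.restrict Ω) := by
    have : c3 = fun x => a x ^ 0 * ((1/(2*ε^2)) * (4 * ρ x * φ x ^ 3)) := by
      funext x; simp only [hc3]; ring
    rw [this]
    exact integ 0 _ (continuous_const.mul ((continuous_const.mul hρc).mul (hφc.pow 3)))
  have hint4 : Integrable c4 (volume.restrict Ω) := by
    have : c4 = fun x => a x ^ 0 * ((1/(2*ε^2)) * φ x ^ 4) := by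
      funext x; simp only [hc4]; ring
    rw [this]
    exact integ 0 _ (continuous_const.mul (hφc.pow 4))
  -- the polynomial inequality
  set I1 := ∫ x in Ω, c1 x with hI1
  set I2 := ∫ x in Ω, c2 x with hI2
  set I3 := ∫ x in Ω, c3 x with hI3
  set I4 := ∫ x in Ω, c4 x with hI4
  have hq : ∀ t : ℝ, 0 ≤ t * I1 + t^2 * I2 + t^3 * I3 + t^4 * I4 := by
    intro t
    have hmin' := hmin (fun y => ρ y + t * φ y) (hρ.add (contDiff_const.mul hφ))
    have e4 : (∫ x in Ω, (t^3 * c3 x + t^4 * c4 x))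
        = t^3 * I3 + t^4 * I4 := by
      rw [integral_add ((hint3.const_mul (t^3)) :
            Integrable (fun x => t^3 * c3 x) (volume.restrict Ω))
          ((hint4.const_mul (t^4)) : Integrable (fun x => t^4 * c4 x) (volume.restrict Ω)),
        show (∫ x in Ω, t^3 * c3 x) = t^3 * I3 from integral_const_mul _ _,
        show (∫ x in Ω, t^4 * c4 x) = t^4 * I4 from integral_const_mul _ _]
    have i34 : Integrable (fun x => t^3 * c3 x + t^4 * c4 x) (volume.restrict Ω) :=
      (hint3.const_mul (t^3)).add (hint4.const_mul (t^4))
    have e3 : (∫ x in Ω, (t^2 * c2 x + (t^3 * c3 x + t^4 * c4 x)))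
        = t^2 * I2 + (t^3 * I3 + t^4 * I4) := by
      rw [integral_add ((hint2.const_mul (t^2)) :
            Integrable (fun x => t^2 * c2 x) (volume.restrict Ω)) i34,
        show (∫ x in Ω, t^2 * c2 x) = t^2 * I2 from integral_const_mul _ _, e4]
    have i234 : Integrable (fun x => t^2 * c2 x + (t^3 * c3 x + t^4 * c4 x))
        (volume.restrict Ω) := (hint2.const_mul (t^2)).add i34
    have e2 : (∫ x in Ω, (t * c1 x + (t^2 * c2 x + (t^3 * c3 x + t^4 * c4 x))))
        = t * I1 + (t^2 * I2 + (t^3 * I3 + t^4 * I4)) := by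
      rw [integral_add ((hint1.const_mul t) :
            Integrable (fun x => t * c1 x) (volume.restrict Ω)) i234,
        show (∫ x in Ω, t * c1 x) = t * I1 from integral_const_mul _ _, e3]
    have i1234 : Integrable (fun x => t * c1 x + (t^2 * c2 x + (t^3 * c3 x + t^4 * c4 x)))
        (volume.restrict Ω) := (hint1.const_mul t).add i234
    have hsplit : (∫ x in Ω, (((1:ℝ)/2) * gradSqR (fun y => ρ y + t * φ y) x
        + (1/(2*ε^2)) * (a x - (ρ x + t * φ x) ^ 2) ^ 2))
        = (∫ x in Ω, c0 x) + t * I1 + t^2 * I2 + t^3 * I3 + t^4 * I4 := by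
      rw [show (fun x => ((1:ℝ)/2) * gradSqR (fun y => ρ y + t * φ y) x
          + (1/(2*ε^2)) * (a x - (ρ x + t * φ x) ^ 2) ^ 2)
          = fun x => c0 x + (t * c1 x + (t^2 * c2 x + (t^3 * c3 x + t^4 * c4 x)))
        from funext fun x => by rw [hexp t x]; ring]
      rw [integral_add hint0 i1234, e2]
      ring
    rw [hsplit] at hmin'
    linarith
  -- conclude I1 = 0 by differentiating at the minimum
  have hderiv : HasDerivAt (fun t : ℝ => t * I1 + t^2 * I2 + t^3 * I3 + t^4 * I4) I1 0 := by
    have h1 : HasDerivAt (fun t : ℝ => t * I1) I1 0 := by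
      simpa using (hasDerivAt_id (0:ℝ)).mul_const I1
    have h2 : HasDerivAt (fun t : ℝ => t^2 * I2) (2 * 0^1 * I2) 0 :=
      (hasDerivAt_pow 2 0).mul_const I2
    have h3 : HasDerivAt (fun t : ℝ => t^3 * I3) (3 * 0^2 * I3) 0 :=
      (hasDerivAt_pow 3 0).mul_const I3
    have h4 : HasDerivAt (fun t : ℝ => t^4 * I4) (4 * 0^3 * I4) 0 :=
      (hasDerivAt_pow 4 0).mul_const I4
    refine (((h1.add h2).add h3).add h4).congr_deriv ?_
    simp
  have hlocmin : IsLocalMin (fun t : ℝ => t * I1 + t^2 * I2 + t^3 * I3 + t^4 * I4) 0 := by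
    apply Filter.Eventually.of_forall
    intro t
    simpa using hq t
  have := hlocmin.hasDerivAt_eq_zero hderiv
  simpa [hI1] using this

section PtWise

variable {ρ : E3 → ℝ} {u : E3 → ℂ}

lemma normSq_eq (z : ℂ) : ‖z‖^2 = z.re^2 + z.im^2 := by
  rw [Complex.sq_norm, Complex.normSq_apply]; ring

lemma fderiv_coe_mul (hρ : ContDiff ℝ 1 ρ) (hu : ContDiff ℝ 1 u) (x : E3) (j : Fin 3) :
    fderiv ℝ (fun y => (ρ y : ℂ) * u y) x (EuclideanSpace.single j 1)
      = (ρ x : ℂ) * (fderiv ℝ u x (EuclideanSpace.single j 1)) + u x * (pd ρ j x : ℂ) := by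
  have hc : HasFDerivAt (fun y => (ρ y : ℂ)) (Complex.ofRealCLM.comp (fderiv ℝ ρ x)) x :=
    Complex.ofRealCLM.hasFDerivAt.comp x (hρ.differentiable one_ne_zero x).hasFDerivAt
  have h : HasFDerivAt (fun y => (ρ y : ℂ) * u y) _ x := hc.mul (hu.differentiable one_ne_zero x).hasFDerivAt
  rw [h.fderiv]
  simp [pd, smul_eq_mul]

lemma pd_w (hu : ContDiff ℝ 1 u) (x : E3) (j : Fin 3) :
    pd (fun y => (u y).re * (u y).re + (u y).im * (u y).im - 1) j x
      = 2 * (u x).re * (fderiv ℝ u x (EuclideanSpace.single j 1)).re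
        + 2 * (u x).im * (fderiv ℝ u x (EuclideanSpace.single j 1)).im := by
  have hre : HasFDerivAt (fun y => (u y).re) (Complex.reCLM.comp (fderiv ℝ u x)) x :=
    Complex.reCLM.hasFDerivAt.comp x (hu.differentiable one_ne_zero x).hasFDerivAt
  have him : HasFDerivAt (fun y => (u y).im) (Complex.imCLM.comp (fderiv ℝ u x)) x :=
    Complex.imCLM.hasFDerivAt.comp x (hu.differentiable one_ne_zero x).hasFDerivAt
  have h : HasFDerivAt (fun y => (u y).re * (u y).re + (u y).im * (u y).im - 1) _ x :=
    (((hre.mul hre).add (him.mul him)).sub_const 1)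
  rw [pd, h.fderiv]
  simp [smul_eq_mul]
  ring

lemma pd_phi (hρ : ContDiff ℝ 1 ρ) (hu : ContDiff ℝ 1 u) (x : E3) (j : Fin 3) :
    pd (fun y => ρ y * ((u y).re * (u y).re + (u y).im * (u y).im - 1)) j x
      = ρ x * pd (fun y => (u y).re * (u y).re + (u y).im * (u y).im - 1) j x
        + ((u x).re * (u x).re + (u x).im * (u x).im - 1) * pd ρ j x := by
  have hw : ContDiff ℝ 1 (fun y => (u y).re * (u y).re + (u y).im * (u y).im - 1) := by
    have hre : ContDiff ℝ 1 (fun y => (u y).re) := Complex.reCLM.contDiff.comp hu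
    have him : ContDiff ℝ 1 (fun y => (u y).im) := Complex.imCLM.contDiff.comp hu
    exact ((hre.mul hre).add (him.mul him)).sub contDiff_const
  have h : HasFDerivAt (fun y => ρ y * ((u y).re * (u y).re + (u y).im * (u y).im - 1)) _ x :=
    (hρ.differentiable one_ne_zero x).hasFDerivAt.mul (hw.differentiable one_ne_zero x).hasFDerivAt
  rw [pd, h.fderiv]
  simp [pd, smul_eq_mul]

end PtWise

lemma pointwise_decouple {ρ : E3 → ℝ} {u : E3 → ℂ} (hρ : ContDiff ℝ 1 ρ) (hu : ContDiff ℝ 1 u)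
    (ε : ℝ) (hε : ε ≠ 0) (A : ℝ) (x : E3) :
    (1/2) * gradSqC (fun y => (ρ y : ℂ) * u y) x + (1/(2*ε^2)) * (A - ‖(ρ x : ℂ) * u x‖^2)^2
    = ((1/2) * gradSqR ρ x + (1/(2*ε^2)) * (A - ρ x^2)^2)
      + ((1/2) * ρ x^2 * gradSqC u x + (ρ x^4/(2*ε^2)) * (1 - ‖u x‖^2)^2)
      + (1/2) * ((∑ j : Fin 3, pd ρ j x *
            pd (fun y => ρ y * ((u y).re * (u y).re + (u y).im * (u y).im - 1)) j x)
          - (2/ε^2) * (ρ x * (ρ x * ((u x).re * (u x).re + (u x).im * (u x).im - 1))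
              * (A - ρ x^2))) := by
  have hε2 : (ε:ℝ)^2 ≠ 0 := pow_ne_zero 2 hε
  set p := (u x).re with hp
  set q := (u x).im with hq
  set r := ρ x with hr
  set P : Fin 3 → ℝ := fun j => (fderiv ℝ u x (EuclideanSpace.single j 1)).re with hP
  set Q : Fin 3 → ℝ := fun j => (fderiv ℝ u x (EuclideanSpace.single j 1)).im with hQ
  set R : Fin 3 → ℝ := fun j => pd ρ j x with hR
  have h2 : gradSqC u x = ∑ j : Fin 3, (P j^2 + Q j^2) :=
    Finset.sum_congr rfl fun j _ => normSq_eq _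
  have h1 : gradSqC (fun y => (ρ y : ℂ) * u y) x
      = ∑ j : Fin 3, ((p^2+q^2)*(R j)^2 + r^2*(P j^2+Q j^2) + 2*r*(R j*(p*P j+q*Q j))) := by
    refine Finset.sum_congr rfl fun j _ => ?_
    rw [fderiv_coe_mul hρ hu x j, normSq_eq]
    simp only [Complex.add_re, Complex.add_im, Complex.mul_re, Complex.mul_im,
      Complex.ofReal_re, Complex.ofReal_im]
    ring
  have h3 : (∑ j : Fin 3, pd ρ j x *
        pd (fun y => ρ y * ((u y).re * (u y).re + (u y).im * (u y).im - 1)) j x)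
      = ∑ j : Fin 3, ((p*p+q*q-1)*(R j)^2 + 2*r*(R j*(p*P j+q*Q j))) := by
    refine Finset.sum_congr rfl fun j _ => ?_
    rw [pd_phi hρ hu x j, pd_w hu x j]
    simp only [← hp, ← hq, ← hr, ← hP, ← hQ, ← hR]
    ring
  have hS : gradSqR ρ x = ∑ j : Fin 3, (R j)^2 := rfl
  have hnu : ‖u x‖^2 = p^2 + q^2 := normSq_eq _
  have hnru : ‖(ρ x : ℂ) * u x‖^2 = r^2 * (p^2 + q^2) := by
    rw [norm_mul, mul_pow, Complex.norm_real, Real.norm_eq_abs, sq_abs, hnu]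
  rw [h1, h2, h3, hS, hnu, hnru]
  simp only [Finset.sum_add_distrib, ← Finset.mul_sum]
  set S0 := ∑ j : Fin 3, (R j)^2
  set U := ∑ j : Fin 3, (P j^2 + Q j^2)
  set T := ∑ j : Fin 3, (R j*(p*P j+q*Q j))
  field_simp
  ring

/-- the Lassoued–Mironescu decoupling
`E_ε(ρu) = E_ε(ρ) + (1/2)∫_Ω ρ²|∇u|² + (ρ⁴/(2ε²))(1 - |u|²)²`,
where `ρ` is a positive minimizer of `E_ε`, solving the Euler–Lagrange equation
`-Δρ = ρ(a-ρ²)/ε²` with homogeneous Neumann boundary condition. -/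
theorem stmt_1
    (Ω : Set E3) (hΩopen : IsOpen Ω) (hΩbdd : Bornology.IsBounded Ω) (hΩmeas : MeasurableSet Ω)
    (b ε : ℝ) (hb0 : 0 < b) (hb1 : b < 1) (hε : 0 < ε)
    (a : E3 → ℝ) (ha_meas : Measurable a) (ha : ∀ x ∈ Ω, b ≤ a x ∧ a x ≤ 1)
    (ρ : E3 → ℝ) (hρreg : ContDiff ℝ 2 ρ) (hρpos : ∀ x ∈ closure Ω, 0 < ρ x)
    -- ρ is a minimizer of E_ε :
    (hmin : ∀ v : E3 → ℝ, ContDiff ℝ 1 v →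
      (∫ x in Ω, (((1:ℝ)/2) * gradSqR ρ x + (1/(2*ε^2)) * (a x - ρ x ^ 2) ^ 2)) ≤
      ∫ x in Ω, (((1:ℝ)/2) * gradSqR v x + (1/(2*ε^2)) * (a x - v x ^ 2) ^ 2))
    -- and hence solves the Euler–Lagrange equation with Neumann boundary condition :
    (hPDE : ∀ x ∈ Ω, -lap ρ x = ρ x * (a x - ρ x ^ 2) / ε ^ 2)
    (ν : E3 → E3) (hNeu : ∀ x ∈ frontier Ω, fderiv ℝ ρ x (ν x) = 0)
    (u : E3 → ℂ) (hu : ContDiff ℝ 1 u) :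
    (∫ x in Ω, (((1:ℝ)/2) * gradSqC (fun y => (ρ y : ℂ) * u y) x
        + (1/(2*ε^2)) * (a x - ‖(ρ x : ℂ) * u x‖ ^ 2) ^ 2))
      = (∫ x in Ω, (((1:ℝ)/2) * gradSqR ρ x + (1/(2*ε^2)) * (a x - ρ x ^ 2) ^ 2))
        + ∫ x in Ω, (((1:ℝ)/2) * ρ x ^ 2 * gradSqC u x
            + (ρ x ^ 4 / (2*ε^2)) * (1 - ‖u x‖ ^ 2) ^ 2) := by
  have hρ1 : ContDiff ℝ 1 ρ := hρreg.of_le one_le_two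
  have ha1 : ∀ x ∈ Ω, |a x| ≤ 1 := fun x hx =>
    abs_le.2 ⟨by linarith [(ha x hx).1], (ha x hx).2⟩
  -- the test function φ = ρ(|u|² - 1)
  have hre : ContDiff ℝ 1 (fun y => (u y).re) := Complex.reCLM.contDiff.comp hu
  have him : ContDiff ℝ 1 (fun y => (u y).im) := Complex.imCLM.contDiff.comp hu
  have hwcd : ContDiff ℝ 1 (fun y => (u y).re * (u y).re + (u y).im * (u y).im - 1) :=
    ((hre.mul hre).add (him.mul him)).sub contDiff_const
  have hφcd : ContDiff ℝ 1 (fun y => ρ y * ((u y).re * (u y).re + (u y).im * (u y).im - 1)) :=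
    hρ1.mul hwcd
  have hI := first_variation Ω hΩbdd hΩmeas ε hε a ha_meas ha1 ρ hρ1 hmin _ hφcd
  -- continuity facts
  have integ := integ_aux Ω hΩbdd hΩmeas a ha_meas ha1
  have hρc : Continuous ρ := hρ1.continuous
  have huc : Continuous u := hu.continuous
  have hpdρ : ∀ j, Continuous (pd ρ j) := fun j =>
    (hρ1.continuous_fderiv one_ne_zero).clm_apply continuous_const
  have hpdφ : ∀ j, Continuous
      (pd (fun y => ρ y * ((u y).re * (u y).re + (u y).im * (u y).im - 1)) j) := fun j =>
    (hφcd.continuous_fderiv one_ne_zero).clm_apply continuous_const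
  have hS0 : Continuous (fun x => gradSqR ρ x) := by
    unfold gradSqR; exact continuous_finset_sum _ fun j _ => (hpdρ j).pow 2
  have hSu : Continuous (fun x => gradSqC u x) := by
    unfold gradSqC
    exact continuous_finset_sum _ fun j _ =>
      (((hu.continuous_fderiv one_ne_zero).clm_apply continuous_const).norm).pow 2
  have hwc : Continuous (fun y => (u y).re * (u y).re + (u y).im * (u y).im - 1) :=
    hwcd.continuous
  -- integrability of the three integrands
  have hintG : Integrable (fun x => ((1:ℝ)/2) * gradSqR ρ x
      + (1/(2*ε^2)) * (a x - ρ x ^ 2) ^ 2) (volume.restrict Ω) := by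
    have : (fun x => ((1:ℝ)/2) * gradSqR ρ x + (1/(2*ε^2)) * (a x - ρ x ^ 2) ^ 2)
        = fun x => a x ^ 0 * ((1/2) * gradSqR ρ x + (1/(2*ε^2)) * ρ x ^ 4)
          + a x ^ 1 * ((1/(2*ε^2)) * (-2 * ρ x ^ 2)) + a x ^ 2 * (1/(2*ε^2)) := by
      funext x; ring
    rw [this]
    exact ((integ 0 _ ((continuous_const.mul hS0).add
        (continuous_const.mul (hρc.pow 4)))).add
      (integ 1 _ (continuous_const.mul (continuous_const.mul (hρc.pow 2))))).add
      (integ 2 _ continuous_const)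
  have hintH : Integrable (fun x => ((1:ℝ)/2) * ρ x ^ 2 * gradSqC u x
      + (ρ x ^ 4 / (2*ε^2)) * (1 - ‖u x‖ ^ 2) ^ 2) (volume.restrict Ω) := by
    have : (fun x => ((1:ℝ)/2) * ρ x ^ 2 * gradSqC u x
        + (ρ x ^ 4 / (2*ε^2)) * (1 - ‖u x‖ ^ 2) ^ 2)
        = fun x => a x ^ 0 * (((1:ℝ)/2) * ρ x ^ 2 * gradSqC u x
          + (ρ x ^ 4 / (2*ε^2)) * (1 - ‖u x‖ ^ 2) ^ 2) := by
      funext x; ring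
    rw [this]
    exact integ 0 _ (((continuous_const.mul (hρc.pow 2)).mul hSu).add
      (((hρc.pow 4).div_const _).mul
        ((continuous_const.sub (huc.norm.pow 2)).pow 2)))
  have hintK : Integrable (fun x => (∑ j : Fin 3, pd ρ j x *
        pd (fun y => ρ y * ((u y).re * (u y).re + (u y).im * (u y).im - 1)) j x)
      - (2/ε^2) * (ρ x * (ρ x * ((u x).re * (u x).re + (u x).im * (u x).im - 1))
          * (a x - ρ x ^ 2))) (volume.restrict Ω) := by
    have : (fun x => (∑ j : Fin 3, pd ρ j x *
          pd (fun y => ρ y * ((u y).re * (u y).re + (u y).im * (u y).im - 1)) j x)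
        - (2/ε^2) * (ρ x * (ρ x * ((u x).re * (u x).re + (u x).im * (u x).im - 1))
            * (a x - ρ x ^ 2)))
        = fun x => a x ^ 0 * ((∑ j : Fin 3, pd ρ j x *
            pd (fun y => ρ y * ((u y).re * (u y).re + (u y).im * (u y).im - 1)) j x)
          + (2/ε^2) * (ρ x * (ρ x * ((u x).re * (u x).re + (u x).im * (u x).im - 1))
              * ρ x ^ 2))
          + a x ^ 1 * (-(2/ε^2) * (ρ x * (ρ x
              * ((u x).re * (u x).re + (u x).im * (u x).im - 1)))) := by
      funext x; ring
    rw [this]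
    exact (integ 0 _ ((continuous_finset_sum _ fun j _ => (hpdρ j).mul (hpdφ j)).add
        (continuous_const.mul ((hρc.mul (hρc.mul hwc)).mul (hρc.pow 2))))).add
      (integ 1 _ (continuous_const.mul (hρc.mul (hρc.mul hwc))))
  -- name the three integrands
  set Gf : E3 → ℝ := fun x => ((1:ℝ)/2) * gradSqR ρ x
      + (1/(2*ε^2)) * (a x - ρ x ^ 2) ^ 2 with hGf
  set Hf : E3 → ℝ := fun x => ((1:ℝ)/2) * ρ x ^ 2 * gradSqC u x
      + (ρ x ^ 4 / (2*ε^2)) * (1 - ‖u x‖ ^ 2) ^ 2 with hHf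
  set Kf : E3 → ℝ := fun x => (∑ j : Fin 3, pd ρ j x *
        pd (fun y => ρ y * ((u y).re * (u y).re + (u y).im * (u y).im - 1)) j x)
      - (2/ε^2) * (ρ x * (ρ x * ((u x).re * (u x).re + (u x).im * (u x).im - 1))
          * (a x - ρ x ^ 2)) with hKf
  -- pointwise decoupling
  have hpt : (fun x => ((1:ℝ)/2) * gradSqC (fun y => (ρ y : ℂ) * u y) x
      + (1/(2*ε^2)) * (a x - ‖(ρ x : ℂ) * u x‖ ^ 2) ^ 2)
      = fun x => Gf x + (Hf x + (1/2) * Kf x) := by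
    funext x
    have := pointwise_decouple hρ1 hu ε hε.ne' (a x) x
    simp only [hGf, hHf, hKf]
    linarith [this]
  have e1 : (∫ x in Ω, (((1:ℝ)/2) * gradSqC (fun y => (ρ y : ℂ) * u y) x
      + (1/(2*ε^2)) * (a x - ‖(ρ x : ℂ) * u x‖ ^ 2) ^ 2))
      = ∫ x in Ω, (Gf x + (Hf x + (1/2) * Kf x)) := by rw [hpt]
  have iHK : Integrable (fun x => Hf x + (1/2) * Kf x) (volume.restrict Ω) :=
    hintH.add (hintK.const_mul (1/2))
  have e2 : (∫ x in Ω, (Gf x + (Hf x + (1/2) * Kf x)))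
      = (∫ x in Ω, Gf x) + ∫ x in Ω, (Hf x + (1/2) * Kf x) := integral_add hintG iHK
  have e3 : (∫ x in Ω, (Hf x + (1/2) * Kf x))
      = (∫ x in Ω, Hf x) + (1/2) * ∫ x in Ω, Kf x := by
    rw [integral_add hintH ((hintK.const_mul (1/2)) :
        Integrable (fun x => (1/2) * Kf x) (volume.restrict Ω)),
      show (∫ x in Ω, (1/2) * Kf x) = (1/2) * ∫ x in Ω, Kf x from integral_const_mul _ _]
  rw [e1, e2, e3, hI]
  ring
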